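/- Main Theorem (connected decision regions for pyramidal networks): Consider a feedforward network f_L with layer widths d = n_0 ≥ n_1 ≥ … ≥ n_{L−1}, output width n_L = m, where for 1 ≤ l ≤ L−1 the activation σ_l : ℝ → ℝ is continuous, strictly increasing, and surjective onto ℝ, each hidden weight matrix W_l ∈ ℝ^{n_{l−1}×n_l} has full rank n_l, and the output layer is affine. Then for every class j, the decision region C_j = {x ∈ ℝ^d : (f_L)_j(x) > (f_L)_k(x) for all k ≠ j} is an open connected subset of ℝ^d. -/

import Mathlib

open Matrix

/-- Preimage of a preconnected set under a surjective linear map is preconnected. -/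
lemma aux_preimage_linear_surj {p q : ℕ}
    (L : (Fin p → ℝ) →ₗ[ℝ] (Fin q → ℝ)) (hL : Function.Surjective L)
    {S : Set (Fin q → ℝ)} (hS : IsPreconnected S) :
    IsPreconnected (L ⁻¹' S) := by
  obtain ⟨s, hs⟩ := L.exists_rightInverse_of_surjective (LinearMap.range_eq_top.2 hL)
  have hsid : ∀ y, L (s y) = y := fun y => by
    have := congrArg (fun g => g y) (congrArg (fun g => g.toFun) hs)
    simpa using this
  have himg : L ⁻¹' S =
      (fun pr : (Fin q → ℝ) × (Fin p → ℝ) => s pr.1 + pr.2) ''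
        (S ×ˢ ((LinearMap.ker L : Submodule ℝ (Fin p → ℝ)) : Set (Fin p → ℝ))) := by
    ext x
    constructor
    · intro hx
      refine ⟨⟨L x, x - s (L x)⟩, ⟨hx, ?_⟩, by simp⟩
      simp [LinearMap.mem_ker, map_sub, hsid]
    · rintro ⟨⟨c, k⟩, ⟨hc, hk⟩, rfl⟩
      have hk' : L k = 0 := hk
      simpa [Set.mem_preimage, map_add, hsid, hk'] using hc
  rw [himg]
  have hker : IsPreconnected ((LinearMap.ker L : Submodule ℝ (Fin p → ℝ)) :
      Set (Fin p → ℝ)) := (LinearMap.ker L).convex.isPreconnected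
  exact (hS.prod hker).image _
    (((s.continuous_of_finiteDimensional.comp continuous_fst).add continuous_snd).continuousOn)

/-- Preimage of a preconnected set under an affine-then-activation layer map. -/
lemma aux_layer_preimage {p q : ℕ}
    (M : Matrix (Fin q) (Fin p) ℝ) (hM : Function.Surjective M.mulVec)
    (c : Fin q → ℝ) (τ : ℝ → ℝ) (hτc : Continuous τ) (hτm : StrictMono τ)
    (hτs : Function.Surjective τ)
    {S : Set (Fin q → ℝ)} (hS : IsPreconnected S) :
    IsPreconnected ((fun x => fun i => τ ((M.mulVec x + c) i)) ⁻¹' S) := by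
  -- homeomorphism from τ
  let e : ℝ ≃o ℝ := StrictMono.orderIsoOfSurjective τ hτm hτs
  let h : ℝ ≃ₜ ℝ := e.toHomeomorph
  let H : (Fin q → ℝ) ≃ₜ (Fin q → ℝ) := Homeomorph.piCongrRight fun _ => h
  have hH : ∀ y : Fin q → ℝ, H y = fun i => τ (y i) := fun y => rfl
  have h1 : IsPreconnected (H ⁻¹' S) := H.isPreconnected_preimage.2 hS
  have h2 : IsPreconnected ((fun z : Fin q → ℝ => z + c) ⁻¹' (H ⁻¹' S)) := by
    have : (fun z : Fin q → ℝ => z + c) ⁻¹' (H ⁻¹' S) =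
        (Homeomorph.addRight c) ⁻¹' (H ⁻¹' S) := rfl
    rw [this]
    exact (Homeomorph.addRight c).isPreconnected_preimage.2 h1
  have h3 : IsPreconnected (M.mulVecLin ⁻¹' ((fun z : Fin q → ℝ => z + c) ⁻¹' (H ⁻¹' S))) :=
    aux_preimage_linear_surj M.mulVecLin (by rw [Matrix.coe_mulVecLin]; exact hM) h2
  exact h3

theorem main_connected_decision_regions
    (Lm : ℕ) (n : ℕ → ℕ)
    (σ : ℕ → ℝ → ℝ)
    (hσ : ∀ l, 1 ≤ l → l ≤ Lm →
      Continuous (σ l) ∧ StrictMono (σ l) ∧ Function.Surjective (σ l))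
    (W : (k : ℕ) → Matrix (Fin (n k)) (Fin (n (k + 1))) ℝ)
    (b : (k : ℕ) → Fin (n (k + 1)) → ℝ)
    (hpyr : ∀ k, k + 1 ≤ Lm → n (k + 1) ≤ n k)
    (hrank : ∀ k, k + 1 ≤ Lm → (W k).rank = n (k + 1))
    (f : (k : ℕ) → (Fin (n 0) → ℝ) → (Fin (n k) → ℝ))
    (hf0 : ∀ x, f 0 x = x)
    (hfhid : ∀ k, k + 1 ≤ Lm →
      ∀ x, f (k + 1) x = fun i => σ (k + 1) (((W k)ᵀ.mulVec (f k x) + b k) i))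
    (hfL : ∀ x, f (Lm + 1) x = (W Lm)ᵀ.mulVec (f Lm x) + b Lm) :
    ∀ j : Fin (n (Lm + 1)),
      IsOpen {x : Fin (n 0) → ℝ | ∀ k, k ≠ j → f (Lm + 1) x k < f (Lm + 1) x j} ∧
      IsPreconnected {x : Fin (n 0) → ℝ | ∀ k, k ≠ j → f (Lm + 1) x k < f (Lm + 1) x j} := by
  intro j
  -- surjectivity of the hidden-layer linear maps
  have hsurj : ∀ k, k + 1 ≤ Lm → Function.Surjective ((W k)ᵀ.mulVec) := by
    intro k hk
    have hr : ((W k)ᵀ).rank = n (k + 1) := by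
      rw [Matrix.rank_transpose]; exact hrank k hk
    have : LinearMap.range ((W k)ᵀ).mulVecLin = ⊤ := by
      apply Submodule.eq_top_of_finrank_eq
      rw [← Matrix.rank]
      simp [hr]
    exact LinearMap.range_eq_top.1 this
  -- inductive preconnectedness and continuity of hidden layers
  have main : ∀ k, k ≤ Lm → Continuous (f k) ∧
      ∀ S : Set (Fin (n k) → ℝ), IsPreconnected S → IsPreconnected (f k ⁻¹' S) := by
    intro k
    induction k with
    | zero =>
      intro _
      have hfid : f 0 = id := by funext x; simp [hf0]
      rw [hfid]
      exact ⟨continuous_id, fun S hS => by simpa using hS⟩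
    | succ k ih =>
      intro hk1
      have hk : k ≤ Lm := Nat.le_of_succ_le hk1
      obtain ⟨ihc, ihp⟩ := ih hk
      obtain ⟨hc, hm, hs⟩ := hσ (k + 1) (Nat.succ_le_succ (Nat.zero_le k)) hk1
      have hfeq : f (k + 1) =
          (fun y => fun i => σ (k + 1) (((W k)ᵀ.mulVec y + b k) i)) ∘ f k := by
        funext x; exact hfhid k hk1 x
      constructor
      · rw [hfeq]
        refine Continuous.comp ?_ ihc
        refine continuous_pi fun i => hc.comp ?_
        exact (continuous_apply i).comp
          ((((W k)ᵀ.mulVecLin).continuous_of_finiteDimensional).add continuous_const)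
      · intro S hS
        rw [hfeq, Set.preimage_comp]
        exact ihp _ (aux_layer_preimage ((W k)ᵀ) (hsurj k hk1) (b k) (σ (k + 1)) hc hm hs hS)
  obtain ⟨hcL, hpL⟩ := main Lm le_rfl
  have hfeqL : f (Lm + 1) = (fun y => (W Lm)ᵀ.mulVec y + b Lm) ∘ f Lm := funext hfL
  set S : Set (Fin (n (Lm + 1)) → ℝ) := {y | ∀ k, k ≠ j → y k < y j} with hSdef
  have hreg : {x : Fin (n 0) → ℝ | ∀ k, k ≠ j → f (Lm + 1) x k < f (Lm + 1) x j}
      = f (Lm + 1) ⁻¹' S := rfl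
  have hcL1 : Continuous (f (Lm + 1)) := by
    rw [hfeqL]
    exact ((((W Lm)ᵀ.mulVecLin).continuous_of_finiteDimensional).add continuous_const).comp hcL
  have hSopen : IsOpen S := by
    have : S = ⋂ k, ⋂ (_ : k ≠ j), {y : Fin (n (Lm + 1)) → ℝ | y k < y j} := by
      ext y; simp [hSdef]
    rw [this]
    exact isOpen_iInter_of_finite fun k => isOpen_iInter_of_finite fun _ =>
      isOpen_lt (continuous_apply k) (continuous_apply j)
  have hSconv : Convex ℝ S := by
    have : S = ⋂ k, ⋂ (_ : k ≠ j), {y : Fin (n (Lm + 1)) → ℝ | y k - y j < (0 : ℝ)} := by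
      ext y; simp [hSdef, sub_neg]
    rw [this]
    refine convex_iInter fun k => convex_iInter fun _ => convex_halfSpace_lt ?_ 0
    exact ⟨fun p q => by simp [add_sub_add_comm], fun r p => by
      simp [smul_eq_mul]; ring⟩
  have hAconv : Convex ℝ ((fun y => (W Lm)ᵀ.mulVec y + b Lm) ⁻¹' S) := by
    have h1 : Convex ℝ ((fun z : Fin (n (Lm + 1)) → ℝ => z + b Lm) ⁻¹' S) :=
      hSconv.translate_preimage_left (b Lm)
    have h2 := h1.linear_preimage ((W Lm)ᵀ.mulVecLin)
    exact h2
  refine ⟨?_, ?_⟩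
  · rw [hreg]; exact hSopen.preimage hcL1
  · rw [hreg, hfeqL, Set.preimage_comp]
    exact hpL _ hAconv.isPreconnected
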